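/- arXiv:1012.1709 — 3 statements merged into one kernel-verified Lean document; each statement's English description precedes it below -/
import Mathlib

section
/- Let a = a_1 a_2 … be an infinite word over an arbitrary alphabet, let C ≥ 2 be an integer, and let n ≥ 1 be an integer such that p(n, a) ≤ C·n. Then there exist finite words W, U, V (V possibly empty) such that the word W U V U is a prefix of a of length at most (C+1)·n, |U| ≥ n/3, and |W| + |V| ≤ (3C+1)·|U|. -/
/-- `L` is a prefix of the infinite word `w 1 w 2 w 3 ⋯`. -/
def WordPrefix {A : Type*} (L : List A) (w : ℕ → A) : Prop :=
  ∀ i : Fin L.length, L.get i = w (i.1 + 1)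

/-- The finite word `w (a+1) ⋯ w (a+m)`. -/
def wseg {A : Type*} (w : ℕ → A) (a m : ℕ) : List A :=
  (List.range m).map fun t => w (a + 1 + t)

lemma wseg_length {A : Type*} (w : ℕ → A) (a m : ℕ) : (wseg w a m).length = m := by
  simp [wseg]

lemma wseg_append {A : Type*} (w : ℕ → A) {a b m k : ℕ} (h : b = a + m) :
    wseg w a m ++ wseg w b k = wseg w a (m + k) := by
  subst h
  unfold wseg
  rw [List.range_add, List.map_append, List.map_map]
  congr 1
  apply List.map_congr_left
  intro t _
  simp only [Function.comp_apply]
  congr 1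
  omega

lemma wseg_eq {A : Type*} (w : ℕ → A) {a b m : ℕ}
    (h : ∀ t, t < m → w (a + 1 + t) = w (b + 1 + t)) : wseg w a m = wseg w b m := by
  unfold wseg
  apply List.map_congr_left
  intro t ht
  exact h t (List.mem_range.mp ht)

lemma wseg_congr {A : Type*} (w : ℕ → A) {a m m' : ℕ} (h : m = m') :
    wseg w a m = wseg w a m' := by rw [h]

lemma wseg_prefix {A : Type*} (w : ℕ → A) (k : ℕ) : WordPrefix (wseg w 0 k) w := by
  intro i
  simp [wseg]
  congr 1
  erw [List.get_eq_getElem, List.getElem_map, List.getElem_range]; rw [Nat.add_comm]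

lemma pigeon {A : Type*} (w : ℕ → A) (C n : ℕ)
    (hcomplexity :
      {bl : Fin n → A | ∃ ℓ : ℕ, ∀ i : Fin n, bl i = w (ℓ + 1 + i.1)}.encard ≤ (C * n : ℕ)) :
    ∃ i j : ℕ, i < j ∧ j ≤ C * n ∧ ∀ t, t < n → w (i + 1 + t) = w (j + 1 + t) := by
  classical
  set S := {bl : Fin n → A | ∃ ℓ : ℕ, ∀ i : Fin n, bl i = w (ℓ + 1 + i.1)} with hS
  have hfin : S.Finite := Set.finite_of_encard_le_coe hcomplexity
  have hncard : S.ncard ≤ C * n :=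
    (Set.encard_le_coe_iff_finite_ncard_le.mp hcomplexity).2
  have hcard : hfin.toFinset.card ≤ C * n := by
    rwa [← Set.ncard_eq_toFinset_card S hfin]
  obtain ⟨x, -, y, -, hxy, hfxy⟩ :=
    Finset.exists_ne_map_eq_of_card_lt_of_maps_to
      (s := (Finset.univ : Finset (Fin (C * n + 1)))) (t := hfin.toFinset)
      (by simpa using Nat.lt_succ_of_le hcard)
      (f := fun ℓ : Fin (C * n + 1) => fun i : Fin n => w (ℓ.1 + 1 + i.1))
      (fun ℓ _ => by
        rw [Finset.mem_coe, Set.Finite.mem_toFinset]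
        exact ⟨ℓ.1, fun i => rfl⟩)
  have hvals : ∀ t, t < n → w (x.1 + 1 + t) = w (y.1 + 1 + t) := by
    intro t ht
    exact congrFun hfxy ⟨t, ht⟩
  rcases lt_or_gt_of_ne (fun h : x.1 = y.1 => hxy (Fin.ext h)) with h | h
  · exact ⟨x.1, y.1, h, Nat.lt_succ_iff.mp y.2, hvals⟩
  · exact ⟨y.1, x.1, h, Nat.lt_succ_iff.mp x.2, fun t ht => (hvals t ht).symm⟩

theorem repetition_in_low_complexity_word {A : Type*} (w : ℕ → A) (C n : ℕ)
    (hC : 2 ≤ C) (hn : 1 ≤ n)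
    (hcomplexity :
      {bl : Fin n → A | ∃ ℓ : ℕ, ∀ i : Fin n, bl i = w (ℓ + 1 + i.1)}.encard ≤ (C * n : ℕ)) :
    ∃ W U V : List A,
      WordPrefix (W ++ U ++ V ++ U) w ∧
      (W ++ U ++ V ++ U).length ≤ (C + 1) * n ∧
      n ≤ 3 * U.length ∧
      W.length + V.length ≤ (3 * C + 1) * U.length := by
  obtain ⟨i, j, hij, hjC, H⟩ := pigeon w C n hcomplexity
  set d := j - i with hd
  have hjd : j = i + d := by omega
  have hd1 : 1 ≤ d := by omega
  have hCn : (C + 1) * n = C * n + n := by ring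
  by_cases hcase : n ≤ 3 * d
  · -- the two occurrences are far apart: U is a block of length min d n
    set m := min d n with hm
    have hmd : m ≤ d := min_le_left _ _
    have hmn : m ≤ n := min_le_right _ _
    refine ⟨wseg w 0 i, wseg w i m, wseg w (i + m) (d - m), ?_, ?_, ?_, ?_⟩
    · have hUU : wseg w i m = wseg w j m :=
        wseg_eq w (fun t ht => H t (lt_of_lt_of_le ht hmn))
      have e1 : wseg w 0 i ++ wseg w i m = wseg w 0 (i + m) := wseg_append w (by omega)
      have e2 : wseg w 0 (i + m) ++ wseg w (i + m) (d - m) = wseg w 0 (i + m + (d - m)) :=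
        wseg_append w (by omega)
      have e3 : i + m + (d - m) = j := by omega
      have e4 : wseg w 0 j ++ wseg w j m = wseg w 0 (j + m) := wseg_append w (by omega)
      have e : wseg w 0 i ++ wseg w i m ++ wseg w (i + m) (d - m) ++ wseg w i m
          = wseg w 0 (j + m) := by
        rw [e1, e2, e3, hUU, e4]
      rw [e]
      exact wseg_prefix w (j + m)
    · simp only [List.length_append, wseg_length]
      omega
    · rw [wseg_length]
      omega
    · rw [wseg_length, wseg_length, wseg_length]
      -- i + (d - m) = j - m ≤ (3C+2)m - m since j ≤ Cn ≤ 3Cm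
      have h1 : C * n ≤ C * (3 * m) := Nat.mul_le_mul_left _ (by omega)
      have h2 : C * (3 * m) = 3 * C * m := by ring
      have h3 : (3 * C + 1) * m = 3 * C * m + m := by ring
      omega
  · -- the two occurrences are close: period d < n/3
    push_neg at hcase
    set a := (n / (3 * d)) * d with ha
    set m := a + d with hm
    have hdvd := Nat.div_add_mod n (3 * d)
    have hmod : n % (3 * d) < 3 * d := Nat.mod_lt _ (by omega)
    have h3a : 3 * a = (3 * d) * (n / (3 * d)) := by rw [ha]; ring
    have ha3 : 3 * a ≤ n := by omega
    have hm3 : n < 3 * m := by omega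
    have h2ad : 2 * a + d ≤ n - 1 := by omega
    -- period extension
    have H' : ∀ t, t < n → w (i + 1 + t) = w (i + 1 + (t + d)) := by
      intro t ht
      rw [show i + 1 + (t + d) = j + 1 + t by omega]
      exact H t ht
    have Hk : ∀ k t, t + k * d < n + d → w (i + 1 + t) = w (i + 1 + (t + k * d)) := by
      intro k
      induction k with
      | zero => intro t _; rw [show t + 0 * d = t by omega]
      | succ k ih =>
        intro t ht
        have h1 : t + k * d < n := by
          have : t + (k + 1) * d = t + k * d + d := by ring
          omega
        rw [show t + (k + 1) * d = (t + k * d) + d by ring]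
        rw [ih t (by omega)]
        exact H' (t + k * d) h1
    have Hm : ∀ t, t < m → w (i + 1 + t) = w (i + m + 1 + t) := by
      intro t ht
      have hmq : m = (n / (3 * d) + 1) * d := by rw [hm, ha]; ring
      have := Hk (n / (3 * d) + 1) t (by rw [← hmq]; omega)
      rw [← hmq] at this
      rw [show i + m + 1 + t = i + 1 + (t + m) by omega]
      exact this
    refine ⟨wseg w 0 i, wseg w i m, [], ?_, ?_, ?_, ?_⟩
    · have hUU : wseg w i m = wseg w (i + m) m := wseg_eq w Hm
      have e1 : wseg w 0 i ++ wseg w i m = wseg w 0 (i + m) := wseg_append w (by omega)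
      have e2 : wseg w 0 (i + m) ++ wseg w (i + m) m = wseg w 0 (i + m + m) :=
        wseg_append w (by omega)
      have e : wseg w 0 i ++ wseg w i m ++ [] ++ wseg w i m = wseg w 0 (i + m + m) := by
        rw [List.append_nil, e1, hUU, e2]
      rw [e]
      exact wseg_prefix w (i + m + m)
    · simp only [List.length_append, wseg_length, List.length_nil]
      -- i + 2m = (i+d) + (2a+d) ≤ Cn + (n-1)
      omega
    · rw [wseg_length]
      omega
    · rw [wseg_length, wseg_length]
      have h1 : C * n ≤ C * (3 * m) := Nat.mul_le_mul_left _ (by omega)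
      have h2 : C * (3 * m) = 3 * C * m := by ring
      have h3 : (3 * C + 1) * m = 3 * C * m + m := by ring
      simp only [List.length_nil]
      omega
end

section
/- Let (a_ℓ)_{ℓ≥1} be a sequence of positive integers with continued fraction value α = [0; a_1, a_2, …] and convergents p_ℓ/q_ℓ. Then for all integers k, m with 1 ≤ k ≤ m, one has |(q_{k−1} q_m − q_k q_{m−1}) α − (q_{k−1} p_m − q_k p_{m−1})| ≤ 2 q_k / q_m. -/
open Filter Topology

/-- Denominators of the convergents of the continued fraction `[0; a 1, a 2, ...]`:
`q_0 = 1`, `q_1 = a_1`, `q_{ℓ+2} = a_{ℓ+2} q_{ℓ+1} + q_ℓ`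
(this encodes `q_{-1} = 0, q_0 = 1, q_ℓ = a_ℓ q_{ℓ-1} + q_{ℓ-2}`). -/
def cfQ (a : ℕ → ℕ) : ℕ → ℕ
  | 0 => 1
  | 1 => a 1
  | (n + 2) => a (n + 2) * cfQ a (n + 1) + cfQ a n

/-- Numerators of the convergents: `p_0 = 0`, `p_1 = 1`,
`p_{ℓ+2} = a_{ℓ+2} p_{ℓ+1} + p_ℓ` (encoding `p_{-1} = 1, p_0 = 0`). -/
def cfP (a : ℕ → ℕ) : ℕ → ℕ
  | 0 => 0
  | 1 => 1
  | (n + 2) => a (n + 2) * cfP a (n + 1) + cfP a n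

lemma cfQ_pos (a : ℕ → ℕ) (hpos : ∀ ℓ, 1 ≤ ℓ → 0 < a ℓ) : ∀ ℓ, 0 < cfQ a ℓ
  | 0 => by simp [cfQ]
  | 1 => by simpa [cfQ] using hpos 1 le_rfl
  | (n+2) => by
      have h1 := cfQ_pos a hpos (n+1)
      have ha := hpos (n+2) (by omega)
      simp only [cfQ]
      exact Nat.add_pos_left (Nat.mul_pos ha h1) _

lemma cfQ_succ_le (a : ℕ → ℕ) (hpos : ∀ ℓ, 1 ≤ ℓ → 0 < a ℓ) :
    ∀ ℓ, cfQ a ℓ ≤ cfQ a (ℓ+1)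
  | 0 => by simp [cfQ]; exact hpos 1 le_rfl
  | (n+1) => by
      have ha := hpos (n+2) (by omega)
      show cfQ a (n+1) ≤ cfQ a (n+2)
      simp only [cfQ]
      calc cfQ a (n+1) = 1 * cfQ a (n+1) := (one_mul _).symm
        _ ≤ a (n+2) * cfQ a (n+1) + cfQ a n :=
          le_add_of_le_of_nonneg (Nat.mul_le_mul_right _ ha) (Nat.zero_le _)

lemma cf_det (a : ℕ → ℕ) :
    ∀ ℓ, (cfP a (ℓ+1) : ℤ) * cfQ a ℓ - cfP a ℓ * cfQ a (ℓ+1) = (-1)^ℓ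
  | 0 => by simp [cfP, cfQ]
  | (n+1) => by
      have ih := cf_det a n
      show (cfP a (n+2) : ℤ) * cfQ a (n+1) - cfP a (n+1) * cfQ a (n+2) = (-1)^(n+1)
      simp only [cfP, cfQ]
      push_cast
      linear_combination (-(1:ℤ)) * ih + ((-1:ℤ)^n) * (pow_succ (-1:ℤ) n).symm

noncomputable def cfC (a : ℕ → ℕ) (ℓ : ℕ) : ℝ := (cfP a ℓ : ℝ) / (cfQ a ℓ : ℝ)

lemma cfC_diff (a : ℕ → ℕ) (hpos : ∀ ℓ, 1 ≤ ℓ → 0 < a ℓ) (ℓ : ℕ) :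
    cfC a (ℓ+1) - cfC a ℓ = (-1)^ℓ / ((cfQ a ℓ : ℝ) * (cfQ a (ℓ+1) : ℝ)) := by
  have h0 : (0:ℝ) < (cfQ a ℓ : ℝ) := by exact_mod_cast cfQ_pos a hpos ℓ
  have h1 : (0:ℝ) < (cfQ a (ℓ+1) : ℝ) := by exact_mod_cast cfQ_pos a hpos (ℓ+1)
  have hd' : (cfP a (ℓ+1) : ℝ) * cfQ a ℓ - cfP a ℓ * cfQ a (ℓ+1) = (-1)^ℓ := by
    exact_mod_cast cf_det a ℓ
  have hnum : (cfP a (ℓ+1) : ℝ) * cfQ a ℓ - (cfQ a (ℓ+1) : ℝ) * cfP a ℓ = (-1)^ℓ := by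
    linear_combination hd'
  rw [cfC, cfC, div_sub_div _ _ h1.ne' h0.ne', hnum, mul_comm ((cfQ a (ℓ+1) : ℝ))]

lemma cfC_bound (a : ℕ → ℕ) (hpos : ∀ ℓ, 1 ≤ ℓ → 0 < a ℓ) : ∀ d ℓ,
    0 ≤ (-1)^ℓ * (cfC a (ℓ+d) - cfC a ℓ) ∧
    (-1)^ℓ * (cfC a (ℓ+d) - cfC a ℓ) ≤ 1 / ((cfQ a ℓ : ℝ) * (cfQ a (ℓ+1) : ℝ))
  | 0, ℓ => by
      have h0 : (0:ℝ) < (cfQ a ℓ : ℝ) := by exact_mod_cast cfQ_pos a hpos ℓ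
      have h1 : (0:ℝ) < (cfQ a (ℓ+1) : ℝ) := by exact_mod_cast cfQ_pos a hpos (ℓ+1)
      constructor
      · simp
      · simp only [Nat.add_zero, sub_self, mul_zero]
        positivity
  | (d+1), ℓ => by
      have ih := cfC_bound a hpos d (ℓ+1)
      have hE : ℓ + 1 + 1 = ℓ + 2 := rfl
      rw [hE] at ih
      have hdiff := cfC_diff a hpos ℓ
      have h0 : (0:ℝ) < (cfQ a ℓ : ℝ) := by exact_mod_cast cfQ_pos a hpos ℓ
      have h1 : (0:ℝ) < (cfQ a (ℓ+1) : ℝ) := by exact_mod_cast cfQ_pos a hpos (ℓ+1)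
      have h2 : (0:ℝ) < (cfQ a (ℓ+2) : ℝ) := by exact_mod_cast cfQ_pos a hpos (ℓ+2)
      have hmono : (cfQ a ℓ : ℝ) ≤ (cfQ a (ℓ+1) : ℝ) := by
        exact_mod_cast cfQ_succ_le a hpos ℓ
      have hmono2 : (cfQ a (ℓ+1) : ℝ) ≤ (cfQ a (ℓ+2) : ℝ) := by
        exact_mod_cast cfQ_succ_le a hpos (ℓ+1)
      have ht : 1 / ((cfQ a (ℓ+1) : ℝ) * (cfQ a (ℓ+2) : ℝ))
          ≤ 1 / ((cfQ a ℓ : ℝ) * (cfQ a (ℓ+1) : ℝ)) := by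
        apply one_div_le_one_div_of_le (by positivity)
        nlinarith
      have hsplit : cfC a (ℓ+(d+1)) - cfC a ℓ
          = (cfC a ((ℓ+1)+d) - cfC a (ℓ+1)) + (cfC a (ℓ+1) - cfC a ℓ) := by
        have h : ℓ + (d+1) = (ℓ+1) + d := by omega
        rw [h]; ring
      have hpos1 : 0 < 1 / ((cfQ a (ℓ+1) : ℝ) * (cfQ a (ℓ+2) : ℝ)) := by positivity
      rcases Nat.even_or_odd ℓ with he | ho
      · have hp : ((-1:ℝ))^ℓ = 1 := he.neg_one_pow
        have hp1 : ((-1:ℝ))^(ℓ+1) = -1 := by rw [pow_succ, hp]; ring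
        rw [hp1] at ih
        have hd2 : cfC a (ℓ+1) - cfC a ℓ = 1 / ((cfQ a ℓ : ℝ) * (cfQ a (ℓ+1) : ℝ)) := by
          rw [hdiff, hp]
        rw [hp, hsplit]
        constructor <;> linarith [ih.1, ih.2, ht, hd2]
      · have hp : ((-1:ℝ))^ℓ = -1 := ho.neg_one_pow
        have hp1 : ((-1:ℝ))^(ℓ+1) = 1 := by rw [pow_succ, hp]; ring
        rw [hp1] at ih
        have hd2 : cfC a (ℓ+1) - cfC a ℓ = -(1 / ((cfQ a ℓ : ℝ) * (cfQ a (ℓ+1) : ℝ))) := by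
          rw [hdiff, hp, neg_div]
        rw [hp, hsplit]
        constructor <;> linarith [ih.1, ih.2, ht, hd2]

lemma cfC_close (a : ℕ → ℕ) (hpos : ∀ ℓ, 1 ≤ ℓ → 0 < a ℓ) (α : ℝ)
    (hα : Tendsto (fun ℓ => (cfP a ℓ : ℝ) / (cfQ a ℓ : ℝ)) atTop (𝓝 α)) (ℓ : ℕ) :
    |α - cfC a ℓ| ≤ 1 / ((cfQ a ℓ : ℝ) * (cfQ a (ℓ+1) : ℝ)) := by
  have htend : Tendsto (fun n => cfC a n - cfC a ℓ) atTop (𝓝 (α - cfC a ℓ)) :=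
    hα.sub_const _
  have habs : Tendsto (fun n => |cfC a n - cfC a ℓ|) atTop (𝓝 |α - cfC a ℓ|) :=
    htend.abs
  apply le_of_tendsto habs
  filter_upwards [eventually_ge_atTop ℓ] with n hn
  obtain ⟨d, rfl⟩ := Nat.exists_eq_add_of_le hn
  have h := cfC_bound a hpos d ℓ
  have h1 : |(-1:ℝ)^ℓ * (cfC a (ℓ+d) - cfC a ℓ)| ≤ 1 / ((cfQ a ℓ : ℝ) * (cfQ a (ℓ+1) : ℝ)) :=
    abs_le.mpr ⟨by linarith [h.1, h.2], h.2⟩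
  rwa [abs_mul, abs_pow, abs_neg, abs_one, one_pow, one_mul] at h1

lemma linear_form (a : ℕ → ℕ) (hpos : ∀ ℓ, 1 ≤ ℓ → 0 < a ℓ) (α : ℝ)
    (hα : Tendsto (fun ℓ => (cfP a ℓ : ℝ) / (cfQ a ℓ : ℝ)) atTop (𝓝 α)) (ℓ : ℕ) :
    |(cfQ a ℓ : ℝ) * α - cfP a ℓ| ≤ 1 / (cfQ a (ℓ+1) : ℝ) := by
  have h0 : (0:ℝ) < (cfQ a ℓ : ℝ) := by exact_mod_cast cfQ_pos a hpos ℓ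
  have h1 : (0:ℝ) < (cfQ a (ℓ+1) : ℝ) := by exact_mod_cast cfQ_pos a hpos (ℓ+1)
  have hc := cfC_close a hpos α hα ℓ
  have heq : (cfQ a ℓ : ℝ) * α - cfP a ℓ = (cfQ a ℓ : ℝ) * (α - cfC a ℓ) := by
    rw [cfC, mul_sub, mul_div_assoc', mul_div_cancel_left₀ _ h0.ne']
  rw [heq, abs_mul, abs_of_pos h0]
  calc (cfQ a ℓ : ℝ) * |α - cfC a ℓ|
      ≤ (cfQ a ℓ : ℝ) * (1 / ((cfQ a ℓ : ℝ) * (cfQ a (ℓ+1) : ℝ))) :=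
        mul_le_mul_of_nonneg_left hc h0.le
    _ = 1 / (cfQ a (ℓ+1) : ℝ) := by field_simp

theorem linear_form_estimate_one (a : ℕ → ℕ) (hpos : ∀ ℓ, 1 ≤ ℓ → 0 < a ℓ)
    (α : ℝ) (hα : Tendsto (fun ℓ => (cfP a ℓ : ℝ) / (cfQ a ℓ : ℝ)) atTop (𝓝 α))
    (k m : ℕ) (hk : 1 ≤ k) (hkm : k ≤ m) :
    |((cfQ a (k - 1) : ℝ) * (cfQ a m : ℝ) - (cfQ a k : ℝ) * (cfQ a (m - 1) : ℝ)) * α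
        - ((cfQ a (k - 1) : ℝ) * (cfP a m : ℝ) - (cfQ a k : ℝ) * (cfP a (m - 1) : ℝ))|
      ≤ 2 * (cfQ a k : ℝ) / (cfQ a m : ℝ) := by
  obtain ⟨k, rfl⟩ : ∃ k', k = k' + 1 := ⟨k - 1, by omega⟩
  obtain ⟨m, rfl⟩ : ∃ m', m = m' + 1 := ⟨m - 1, by omega⟩
  simp only [Nat.add_sub_cancel]
  have e1 := linear_form a hpos α hα (m+1)
  have e2 := linear_form a hpos α hα m
  have hqk : (0:ℝ) < (cfQ a (k+1) : ℝ) := by exact_mod_cast cfQ_pos a hpos (k+1)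
  have hqk0 : (0:ℝ) < (cfQ a k : ℝ) := by exact_mod_cast cfQ_pos a hpos k
  have hqm : (0:ℝ) < (cfQ a (m+1) : ℝ) := by exact_mod_cast cfQ_pos a hpos (m+1)
  have hqm2 : (0:ℝ) < (cfQ a (m+2) : ℝ) := by exact_mod_cast cfQ_pos a hpos (m+2)
  have hkk : (cfQ a k : ℝ) ≤ (cfQ a (k+1) : ℝ) := by
    exact_mod_cast cfQ_succ_le a hpos k
  have hmm : (cfQ a (m+1) : ℝ) ≤ (cfQ a (m+2) : ℝ) := by
    exact_mod_cast cfQ_succ_le a hpos (m+1)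
  have heq : ((cfQ a k : ℝ) * (cfQ a (m+1) : ℝ) - (cfQ a (k+1) : ℝ) * (cfQ a m : ℝ)) * α
        - ((cfQ a k : ℝ) * (cfP a (m+1) : ℝ) - (cfQ a (k+1) : ℝ) * (cfP a m : ℝ))
      = (cfQ a k : ℝ) * ((cfQ a (m+1) : ℝ) * α - cfP a (m+1))
        - (cfQ a (k+1) : ℝ) * ((cfQ a m : ℝ) * α - cfP a m) := by ring
  rw [heq]
  calc |(cfQ a k : ℝ) * ((cfQ a (m+1) : ℝ) * α - cfP a (m+1))
        - (cfQ a (k+1) : ℝ) * ((cfQ a m : ℝ) * α - cfP a m)|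
      ≤ |(cfQ a k : ℝ) * ((cfQ a (m+1) : ℝ) * α - cfP a (m+1))|
        + |(cfQ a (k+1) : ℝ) * ((cfQ a m : ℝ) * α - cfP a m)| := abs_sub _ _
    _ ≤ (cfQ a k : ℝ) * (1 / (cfQ a (m+2) : ℝ))
        + (cfQ a (k+1) : ℝ) * (1 / (cfQ a (m+1) : ℝ)) := by
        rw [abs_mul, abs_mul, abs_of_pos hqk0, abs_of_pos hqk]
        gcongr
    _ ≤ (cfQ a (k+1) : ℝ) * (1 / (cfQ a (m+1) : ℝ))
        + (cfQ a (k+1) : ℝ) * (1 / (cfQ a (m+1) : ℝ)) := by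
        gcongr
    _ = 2 * (cfQ a (k+1) : ℝ) / (cfQ a (m+1) : ℝ) := by ring
end

section
/- Let α be a real number, let P, P', Q, Q' be integers with Q ≥ 1 and |P'Q − PQ'| = 1, and let X, Y be real numbers with 1 ≤ X ≤ Y. Assume that |Qα − P| ≤ Q/Y², |Qα − Q'| ≤ Q/X², and Q ≤ 2XY. Then |Q α² − (P + Q') α + P'| ≤ 5/Q. -/
theorem key_quasi_palindromic_estimate (α : ℝ) (P P' Q Q' : ℤ)
    (hQ : 1 ≤ Q) (hdet : |P' * Q - P * Q'| = 1)
    (X Y : ℝ) (hX : 1 ≤ X) (hXY : X ≤ Y)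
    (h1 : |(Q : ℝ) * α - (P : ℝ)| ≤ (Q : ℝ) / Y ^ 2)
    (h2 : |(Q : ℝ) * α - (Q' : ℝ)| ≤ (Q : ℝ) / X ^ 2)
    (h3 : (Q : ℝ) ≤ 2 * X * Y) :
    |(Q : ℝ) * α ^ 2 - ((P : ℝ) + (Q' : ℝ)) * α + (P' : ℝ)| ≤ 5 / (Q : ℝ) := by
  have hQR : (1:ℝ) ≤ (Q:ℝ) := by exact_mod_cast hQ
  have hQpos : (0:ℝ) < (Q:ℝ) := by linarith
  have hXpos : (0:ℝ) < X := by linarith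
  have hYpos : (0:ℝ) < Y := by linarith
  have hdetR : |(P':ℝ) * Q - (P:ℝ) * Q'| = 1 := by
    exact_mod_cast congrArg (fun n : ℤ => (n:ℝ)) hdet
  have key : (Q:ℝ) * ((Q:ℝ) * α ^ 2 - ((P:ℝ) + (Q':ℝ)) * α + (P':ℝ))
      = ((Q:ℝ) * α - (P:ℝ)) * ((Q:ℝ) * α - (Q':ℝ)) + ((P':ℝ) * Q - (P:ℝ) * Q') := by
    ring
  have h4 : |((Q:ℝ) * α - (P:ℝ)) * ((Q:ℝ) * α - (Q':ℝ))| ≤ ((Q:ℝ)/Y^2) * ((Q:ℝ)/X^2) := by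
    rw [abs_mul]
    exact mul_le_mul h1 h2 (abs_nonneg _) (by positivity)
  have h5 : ((Q:ℝ)/Y^2) * ((Q:ℝ)/X^2) ≤ 4 := by
    rw [div_mul_div_comm, div_le_iff₀ (by positivity)]
    nlinarith [mul_le_mul h3 h3 (le_of_lt hQpos) (by positivity : (0:ℝ) ≤ 2*X*Y)]
  have h6 : |(Q:ℝ) * ((Q:ℝ) * α ^ 2 - ((P:ℝ) + (Q':ℝ)) * α + (P':ℝ))| ≤ 5 := by
    rw [key]
    calc |((Q:ℝ) * α - (P:ℝ)) * ((Q:ℝ) * α - (Q':ℝ)) + ((P':ℝ) * Q - (P:ℝ) * Q')|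
        ≤ |((Q:ℝ) * α - (P:ℝ)) * ((Q:ℝ) * α - (Q':ℝ))| + |(P':ℝ) * Q - (P:ℝ) * Q'| :=
          abs_add_le _ _
      _ ≤ 4 + 1 := add_le_add (h4.trans h5) (le_of_eq hdetR)
      _ = 5 := by norm_num
  rw [abs_mul, abs_of_pos hQpos] at h6
  rw [le_div_iff₀ hQpos]
  linarith [h6]
end
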